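/- For every irrational γ > 0, the Markov constant μ(γ) satisfies μ(γ) = min{υ(γ), υ(γ⁻¹)}, where μ(γ) = inf{c > 0 : |γ - p/q| < c/q² for infinitely many pairs (p,q) ∈ ℤ × ℕ} and υ(γ) = inf{c > 0 : 0 < γ - p/q < c/q² for infinitely many pairs (p,q) ∈ ℤ × ℕ}. -/

import Mathlib

noncomputable def markov (γ : ℝ) : ℝ :=
  sInf {c : ℝ | 0 < c ∧
    {pq : ℤ × ℕ | 0 < pq.2 ∧ |γ - (pq.1 : ℝ) / (pq.2 : ℝ)| < c / (pq.2 : ℝ) ^ 2}.Infinite}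

noncomputable def upsilon (γ : ℝ) : ℝ :=
  sInf {c : ℝ | 0 < c ∧
    {pq : ℤ × ℕ | 0 < pq.2 ∧ 0 < γ - (pq.1 : ℝ) / (pq.2 : ℝ) ∧
      γ - (pq.1 : ℝ) / (pq.2 : ℝ) < c / (pq.2 : ℝ) ^ 2}.Infinite}

namespace Stmt5

open Set

def below (γ c : ℝ) : Set (ℤ × ℕ) :=
  {pq : ℤ × ℕ | 0 < pq.2 ∧ 0 < γ - (pq.1 : ℝ) / (pq.2 : ℝ) ∧
      γ - (pq.1 : ℝ) / (pq.2 : ℝ) < c / (pq.2 : ℝ) ^ 2}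

def above (γ c : ℝ) : Set (ℤ × ℕ) :=
  {pq : ℤ × ℕ | 0 < pq.2 ∧ 0 < (pq.1 : ℝ) / (pq.2 : ℝ) - γ ∧
      (pq.1 : ℝ) / (pq.2 : ℝ) - γ < c / (pq.2 : ℝ) ^ 2}

lemma upsilon_eq (γ : ℝ) : upsilon γ = sInf {c : ℝ | 0 < c ∧ (below γ c).Infinite} := rfl

lemma below_abs {γ c : ℝ} {pq : ℤ × ℕ} (h : pq ∈ below γ c) :
    0 < pq.2 ∧ |γ - (pq.1 : ℝ) / (pq.2 : ℝ)| < c / (pq.2 : ℝ) ^ 2 :=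
  ⟨h.1, by rw [abs_of_pos h.2.1]; exact h.2.2⟩

lemma above_abs {γ c : ℝ} {pq : ℤ × ℕ} (h : pq ∈ above γ c) :
    0 < pq.2 ∧ |γ - (pq.1 : ℝ) / (pq.2 : ℝ)| < c / (pq.2 : ℝ) ^ 2 :=
  ⟨h.1, by rw [abs_sub_comm, abs_of_pos h.2.1]; exact h.2.2⟩

lemma infinite_of_unbounded {S : Set (ℤ × ℕ)} (h : ∀ N : ℕ, ∃ pq ∈ S, N ≤ pq.2) :
    S.Infinite := by
  have h2 : ¬ BddAbove (Prod.snd '' S) := by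
    rintro ⟨B, hB⟩
    obtain ⟨pq, hpq, hN⟩ := h (B + 1)
    have := hB ⟨pq, hpq, rfl⟩
    omega
  exact Set.Infinite.of_image _ (Set.infinite_of_not_bddAbove h2)

lemma unbounded_of_infinite {γ c : ℝ} {S : Set (ℤ × ℕ)} (hS : S.Infinite)
    (hsub : ∀ pq ∈ S, 0 < pq.2 ∧ |γ - (pq.1 : ℝ) / (pq.2 : ℝ)| < c / (pq.2 : ℝ) ^ 2)
    (N : ℕ) : ∃ pq ∈ S, N ≤ pq.2 := by
  by_contra hcon
  push_neg at hcon
  apply hS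
  have hc : 0 < c := by
    obtain ⟨pq, hpq⟩ := hS.nonempty
    obtain ⟨hq, habs⟩ := hsub pq hpq
    have h0 : (0 : ℝ) ≤ |γ - (pq.1 : ℝ) / (pq.2 : ℝ)| := abs_nonneg _
    have hq2 : (0 : ℝ) < (pq.2 : ℝ) ^ 2 := by positivity
    have hpos2 : (0:ℝ) < c / (pq.2 : ℝ) ^ 2 := lt_of_le_of_lt h0 habs
    rcases div_pos_iff.mp hpos2 with ⟨h,_⟩|⟨_,h⟩
    · exact h
    · linarith
  set M : ℤ := ⌈c + |γ| * N⌉ with hM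
  apply Set.Finite.subset ((Set.finite_Icc (-M) M).prod (Set.finite_Iio N))
  rintro ⟨p, q⟩ hpq
  obtain ⟨hq, habs⟩ := hsub _ hpq
  have hqN : q < N := hcon _ hpq
  rw [Set.mem_prod]
  refine ⟨?_, hqN⟩
  simp only [Set.mem_Icc]
  have hq1 : (1 : ℝ) ≤ (q : ℝ) := by exact_mod_cast hq
  have hqpos : (0 : ℝ) < (q : ℝ) := by linarith
  have hqR : (q : ℝ) ≤ (N : ℝ) := by exact_mod_cast hqN.le
  have e : (p : ℝ) - γ * q = (q : ℝ) * ((p : ℝ) / q - γ) := by field_simp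
  have h2 : |(p : ℝ) / q - γ| < c / q ^ 2 := by rwa [abs_sub_comm] at habs
  have h3 : |(p : ℝ) - γ * q| < c / q := by
    rw [e, abs_mul, abs_of_pos hqpos]
    have := mul_lt_mul_of_pos_left h2 hqpos
    calc (q : ℝ) * |(p : ℝ) / q - γ| < (q : ℝ) * (c / q ^ 2) := this
      _ = c / q := by field_simp
  have h4 : c / q ≤ c := div_le_self hc.le hq1
  have h5 : |(p : ℝ)| ≤ |(p : ℝ) - γ * q| + |γ * q| := by
    calc |(p : ℝ)| = |((p : ℝ) - γ * q) + γ * q| := by ring_nf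
      _ ≤ _ := abs_add_le _ _
  have h6 : |γ * q| ≤ |γ| * N := by
    rw [abs_mul, abs_of_pos hqpos]
    have : |γ| * (q : ℝ) ≤ |γ| * (N : ℝ) := by
      apply mul_le_mul_of_nonneg_left hqR (abs_nonneg _)
    exact this
  have h7 : |(p : ℝ)| ≤ c + |γ| * N := by linarith
  have h8 : ((|p| : ℤ) : ℝ) ≤ (M : ℝ) := by
    rw [Int.cast_abs]
    exact h7.trans (Int.le_ceil _)
  exact abs_le.mp (by exact_mod_cast h8)

set_option linter.unusedTactic false


noncomputable def sbStep (γ : ℝ) : (ℤ × ℕ) × (ℤ × ℕ) → (ℤ × ℕ) × (ℤ × ℕ) := fun s =>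
  if ((s.1.1 + s.2.1 : ℤ) : ℝ) / ((s.1.2 + s.2.2 : ℕ) : ℝ) < γ then
    ((s.1.1 + s.2.1, s.1.2 + s.2.2), s.2)
  else
    (s.1, (s.1.1 + s.2.1, s.1.2 + s.2.2))

noncomputable def sb (γ : ℝ) : ℕ → (ℤ × ℕ) × (ℤ × ℕ)
  | 0 => ((⌊γ⌋, 1), (⌊γ⌋ + 1, 1))
  | n + 1 => sbStep γ (sb γ n)

/-- The mediant condition: the step from state `s` moves the left endpoint. -/
def Lcond (γ : ℝ) (s : (ℤ × ℕ) × (ℤ × ℕ)) : Prop :=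
  ((s.1.1 + s.2.1 : ℤ) : ℝ) / ((s.1.2 + s.2.2 : ℕ) : ℝ) < γ

structure SBInv (γ : ℝ) (s : (ℤ × ℕ) × (ℤ × ℕ)) : Prop where
  hb : 0 < s.1.2
  hd : 0 < s.2.2
  hl : (s.1.1 : ℝ) / (s.1.2 : ℝ) < γ
  hr : γ < (s.2.1 : ℝ) / (s.2.2 : ℝ)
  det : s.2.1 * (s.1.2 : ℤ) - s.1.1 * (s.2.2 : ℤ) = 1

lemma irr_ne_div {γ : ℝ} (hγ : Irrational γ) (a : ℤ) (b : ℕ) : γ ≠ (a : ℝ) / (b : ℝ) := by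
  intro h
  exact hγ ⟨(a : ℚ) / (b : ℚ), by push_cast; exact h.symm⟩

lemma sbStep_of_L {γ : ℝ} {s : (ℤ × ℕ) × (ℤ × ℕ)} (h : Lcond γ s) :
    sbStep γ s = ((s.1.1 + s.2.1, s.1.2 + s.2.2), s.2) := if_pos h

lemma sbStep_of_R {γ : ℝ} {s : (ℤ × ℕ) × (ℤ × ℕ)} (h : ¬ Lcond γ s) :
    sbStep γ s = (s.1, (s.1.1 + s.2.1, s.1.2 + s.2.2)) := if_neg h

lemma inv_all {γ : ℝ} (hγ : Irrational γ) : ∀ n, SBInv γ (sb γ n) := by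
  intro n
  induction n with
  | zero =>
    show SBInv γ ((⌊γ⌋, 1), (⌊γ⌋ + 1, 1))
    refine ⟨one_pos, one_pos, ?_, ?_, by push_cast; ring⟩
    · show ((⌊γ⌋ : ℤ) : ℝ) / ((1 : ℕ) : ℝ) < γ
      simp only [Nat.cast_one, div_one]
      exact lt_of_le_of_ne (Int.floor_le γ) (Ne.symm (hγ.ne_int ⌊γ⌋))
    · show γ < ((⌊γ⌋ + 1 : ℤ) : ℝ) / ((1 : ℕ) : ℝ)
      simp only [Nat.cast_one, div_one]
      push_cast
      exact Int.lt_floor_add_one γ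
  | succ n ih =>
    show SBInv γ (sbStep γ (sb γ n))
    by_cases h : Lcond γ (sb γ n)
    · rw [sbStep_of_L h]
      obtain ⟨hb, hd, hl, hr, det⟩ := ih
      refine ⟨Nat.add_pos_left hb _, hd, h, hr, ?_⟩
      show (sb γ n).2.1 * (((sb γ n).1.2 + (sb γ n).2.2 : ℕ) : ℤ) - ((sb γ n).1.1 + (sb γ n).2.1) * ((sb γ n).2.2 : ℤ) = 1
      push_cast
      push_cast at det
      linear_combination det
    · rw [sbStep_of_R h]
      obtain ⟨hb, hd, hl, hr, det⟩ := ih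
      have hm : γ < (((sb γ n).1.1 + (sb γ n).2.1 : ℤ) : ℝ) / (((sb γ n).1.2 + (sb γ n).2.2 : ℕ) : ℝ) := by
        rcases lt_or_eq_of_le (not_lt.mp h) with h' | h'
        · exact h'
        · exact absurd h' (irr_ne_div hγ _ _)
      refine ⟨hb, Nat.add_pos_left hb _, hl, hm, ?_⟩
      show ((sb γ n).1.1 + (sb γ n).2.1) * ((sb γ n).1.2 : ℤ) - (sb γ n).1.1 * (((sb γ n).1.2 + (sb γ n).2.2 : ℕ) : ℤ) = 1
      push_cast
      push_cast at det
      linear_combination det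

lemma qsum_ge {γ : ℝ} (hγ : Irrational γ) (n : ℕ) :
    n + 2 ≤ (sb γ n).1.2 + (sb γ n).2.2 := by
  induction n with
  | zero => show 0 + 2 ≤ 1 + 1; omega
  | succ n ih =>
    have hb := (inv_all hγ n).hb
    have hd := (inv_all hγ n).hd
    show n + 1 + 2 ≤ (sbStep γ (sb γ n)).1.2 + (sbStep γ (sb γ n)).2.2
    by_cases h : Lcond γ (sb γ n)
    · rw [sbStep_of_L h]
      show n + 1 + 2 ≤ (sb γ n).1.2 + (sb γ n).2.2 + (sb γ n).2.2
      omega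
    · rw [sbStep_of_R h]
      show n + 1 + 2 ≤ (sb γ n).1.2 + ((sb γ n).1.2 + (sb γ n).2.2)
      omega

/-- The gap between the two endpoints. -/
lemma gap_eq {γ : ℝ} (hγ : Irrational γ) (n : ℕ) :
    ((sb γ n).2.1 : ℝ) / ((sb γ n).2.2 : ℝ) - ((sb γ n).1.1 : ℝ) / ((sb γ n).1.2 : ℝ)
      = 1 / (((sb γ n).1.2 : ℝ) * ((sb γ n).2.2 : ℝ)) := by
  obtain ⟨hb, hd, _, _, det⟩ := inv_all hγ n
  have hb' : ((sb γ n).1.2 : ℝ) ≠ 0 := Nat.cast_ne_zero.mpr hb.ne'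
  have hd' : ((sb γ n).2.2 : ℝ) ≠ 0 := Nat.cast_ne_zero.mpr hd.ne'
  have detR : ((sb γ n).2.1 : ℝ) * ((sb γ n).1.2 : ℝ)
      - ((sb γ n).1.1 : ℝ) * ((sb γ n).2.2 : ℝ) = 1 := by exact_mod_cast det
  rw [div_sub_div _ _ hd' hb', div_eq_div_iff (mul_ne_zero hd' hb') (mul_ne_zero hb' hd')]
  linear_combination (((sb γ n).1.2 : ℝ) * ((sb γ n).2.2 : ℝ)) * detR

/-- there are infinitely many L-steps -/
lemma exL {γ : ℝ} (hγ : Irrational γ) (N : ℕ) : ∃ n, N ≤ n ∧ Lcond γ (sb γ n) := by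
  by_contra hcon
  push_neg at hcon
  -- left endpoint frozen from N on
  have frozen : ∀ k, (sb γ (N + k)).1 = (sb γ N).1 ∧ (sb γ N).2.2 + k ≤ (sb γ (N + k)).2.2 := by
    intro k
    induction k with
    | zero => exact ⟨rfl, by show (sb γ N).2.2 + 0 ≤ (sb γ N).2.2; omega⟩
    | succ k ih =>
      have h := hcon (N + k) (by omega)
      have : sb γ (N + k + 1) = sbStep γ (sb γ (N + k)) := rfl
      rw [show N + (k+1) = N + k + 1 from rfl, this, sbStep_of_R h]
      have hb := (inv_all hγ (N + k)).hb
      refine ⟨ih.1, ?_⟩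
      show (sb γ N).2.2 + (k + 1) ≤ (sb γ (N + k)).1.2 + (sb γ (N + k)).2.2
      omega
  set a := (sb γ N).1.1
  set b := (sb γ N).1.2
  have hb := (inv_all hγ N).hb
  have hl := (inv_all hγ N).hl
  set ε : ℝ := γ - (a : ℝ) / (b : ℝ) with hε
  have hεpos : 0 < ε := by simp only [hε]; linarith [hl]
  obtain ⟨k, hk⟩ := exists_nat_gt (1 / ε)
  -- at time N + k
  have h1 := (inv_all hγ (N + k)).hr
  have h2 := gap_eq hγ (N + k)
  have h3 := (frozen k).1
  have h4 := (frozen k).2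
  have hd := (inv_all hγ (N + k)).hd
  -- γ - a/b < 1/(b * d) ≤ 1/k
  have hbd : (k : ℝ) ≤ ((sb γ (N+k)).1.2 : ℝ) * ((sb γ (N+k)).2.2 : ℝ) := by
    have e1 : (sb γ (N+k)).1.2 = b := by rw [h3]
    have : (k : ℝ) ≤ ((sb γ (N+k)).2.2 : ℝ) := by
      have : k ≤ (sb γ (N+k)).2.2 := by omega
      exact_mod_cast this
    rw [e1]
    have hb1 : (1 : ℝ) ≤ (b : ℝ) := by exact_mod_cast hb
    nlinarith [Nat.cast_nonneg (sb γ (N+k)).2.2 (α := ℝ)]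
  have h5 : ε < 1 / (((sb γ (N+k)).1.2 : ℝ) * ((sb γ (N+k)).2.2 : ℝ)) := by
    have e1 : ((sb γ (N+k)).1.1 : ℝ) / ((sb γ (N+k)).1.2 : ℝ) = (a : ℝ) / (b : ℝ) := by rw [h3]
    have := h1
    rw [← h2, e1]
    simp only [hε]
    linarith
  have h7 : 1 / (((sb γ (N+k)).1.2 : ℝ) * ((sb γ (N+k)).2.2 : ℝ)) < ε := by
    have h8 : 1 / ε < ((sb γ (N+k)).1.2 : ℝ) * ((sb γ (N+k)).2.2 : ℝ) := lt_of_lt_of_le hk hbd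
    have h9 : (0:ℝ) < 1 / ε := by positivity
    calc 1 / (((sb γ (N+k)).1.2 : ℝ) * ((sb γ (N+k)).2.2 : ℝ)) < 1 / (1 / ε) :=
          one_div_lt_one_div_of_lt h9 h8
      _ = ε := one_div_one_div ε
  linarith

/-- there are infinitely many R-steps -/
lemma exR {γ : ℝ} (hγ : Irrational γ) (N : ℕ) : ∃ n, N ≤ n ∧ ¬ Lcond γ (sb γ n) := by
  by_contra hcon
  push_neg at hcon
  have frozen : ∀ k, (sb γ (N + k)).2 = (sb γ N).2 ∧ (sb γ N).1.2 + k ≤ (sb γ (N + k)).1.2 := by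
    intro k
    induction k with
    | zero => exact ⟨rfl, by show (sb γ N).1.2 + 0 ≤ (sb γ N).1.2; omega⟩
    | succ k ih =>
      have h := hcon (N + k) (by omega)
      have e : sb γ (N + k + 1) = sbStep γ (sb γ (N + k)) := rfl
      rw [show N + (k+1) = N + k + 1 from rfl, e, sbStep_of_L h]
      have hd := (inv_all hγ (N + k)).hd
      refine ⟨ih.1, ?_⟩
      show (sb γ N).1.2 + (k + 1) ≤ (sb γ (N + k)).1.2 + (sb γ (N + k)).2.2
      omega
  set c := (sb γ N).2.1
  set d := (sb γ N).2.2
  have hd := (inv_all hγ N).hd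
  have hr := (inv_all hγ N).hr
  set ε : ℝ := (c : ℝ) / (d : ℝ) - γ with hε
  have hεpos : 0 < ε := by simp only [hε]; linarith [hr]
  obtain ⟨k, hk⟩ := exists_nat_gt (1 / ε)
  have h1 := (inv_all hγ (N + k)).hl
  have h2 := gap_eq hγ (N + k)
  have h3 := (frozen k).1
  have h4 := (frozen k).2
  have hb := (inv_all hγ (N + k)).hb
  have hbd : (k : ℝ) ≤ ((sb γ (N+k)).1.2 : ℝ) * ((sb γ (N+k)).2.2 : ℝ) := by
    have e1 : (sb γ (N+k)).2.2 = d := by rw [h3]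
    have hkc : (k : ℝ) ≤ ((sb γ (N+k)).1.2 : ℝ) := by
      have : k ≤ (sb γ (N+k)).1.2 := by omega
      exact_mod_cast this
    rw [e1]
    have hd1 : (1 : ℝ) ≤ (d : ℝ) := by exact_mod_cast hd
    nlinarith [Nat.cast_nonneg (sb γ (N+k)).1.2 (α := ℝ)]
  have h5 : ε < 1 / (((sb γ (N+k)).1.2 : ℝ) * ((sb γ (N+k)).2.2 : ℝ)) := by
    have e1 : ((sb γ (N+k)).2.1 : ℝ) / ((sb γ (N+k)).2.2 : ℝ) = (c : ℝ) / (d : ℝ) := by rw [h3]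
    rw [← h2, e1]
    simp only [hε]
    linarith
  have h7 : 1 / (((sb γ (N+k)).1.2 : ℝ) * ((sb γ (N+k)).2.2 : ℝ)) < ε := by
    have h8 : 1 / ε < ((sb γ (N+k)).1.2 : ℝ) * ((sb γ (N+k)).2.2 : ℝ) := lt_of_lt_of_le hk hbd
    have h9 : (0:ℝ) < 1 / ε := by positivity
    calc 1 / (((sb γ (N+k)).1.2 : ℝ) * ((sb γ (N+k)).2.2 : ℝ)) < 1 / (1 / ε) :=
          one_div_lt_one_div_of_lt h9 h8
      _ = ε := one_div_one_div ε
  linarith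

lemma switch {P : ℕ → Prop} {r : ℕ} (hr : ¬ P r) :
    ∀ l, r < l → P l → ∃ n, r ≤ n ∧ ¬ P n ∧ P (n + 1) := by
  intro l
  induction l with
  | zero => omega
  | succ m ih =>
    intro hrm hP
    by_cases hm : P m
    · have hrm' : r < m := by
        rcases Nat.lt_or_ge r m with h | h
        · exact h
        · have he : r = m := by omega
          exact absurd hm (he ▸ hr)
      exact ih hrm' hm
    · exact ⟨m, by omega, hm, hP⟩

lemma mediant_left_gap {γ : ℝ} (hγ : Irrational γ) (m : ℕ) :
    ((sb γ m).2.1 : ℝ) / ((sb γ m).2.2 : ℝ)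
      - (((sb γ m).1.1 + (sb γ m).2.1 : ℤ) : ℝ) / (((sb γ m).1.2 + (sb γ m).2.2 : ℕ) : ℝ)
      = 1 / (((sb γ m).2.2 : ℝ) * (((sb γ m).1.2 + (sb γ m).2.2 : ℕ) : ℝ)) := by
  obtain ⟨hb, hd, _, _, det⟩ := inv_all hγ m
  have hb' : ((sb γ m).1.2 : ℝ) ≠ 0 := Nat.cast_ne_zero.mpr hb.ne'
  have hd' : ((sb γ m).2.2 : ℝ) ≠ 0 := Nat.cast_ne_zero.mpr hd.ne'
  have detR : ((sb γ m).2.1 : ℝ) * ((sb γ m).1.2 : ℝ)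
      - ((sb γ m).1.1 : ℝ) * ((sb γ m).2.2 : ℝ) = 1 := by exact_mod_cast det
  push_cast
  rw [div_sub_div _ _ hd' (by positivity), div_eq_div_iff (by positivity) (by positivity)]
  linear_combination (((sb γ m).2.2 : ℝ) * (((sb γ m).1.2 : ℝ) + ((sb γ m).2.2 : ℝ))) * detR

lemma mediant_right_gap {γ : ℝ} (hγ : Irrational γ) (m : ℕ) :
    (((sb γ m).1.1 + (sb γ m).2.1 : ℤ) : ℝ) / (((sb γ m).1.2 + (sb γ m).2.2 : ℕ) : ℝ)
      - ((sb γ m).1.1 : ℝ) / ((sb γ m).1.2 : ℝ)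
      = 1 / (((sb γ m).1.2 : ℝ) * (((sb γ m).1.2 + (sb γ m).2.2 : ℕ) : ℝ)) := by
  obtain ⟨hb, hd, _, _, det⟩ := inv_all hγ m
  have hb' : ((sb γ m).1.2 : ℝ) ≠ 0 := Nat.cast_ne_zero.mpr hb.ne'
  have hd' : ((sb γ m).2.2 : ℝ) ≠ 0 := Nat.cast_ne_zero.mpr hd.ne'
  have detR : ((sb γ m).2.1 : ℝ) * ((sb γ m).1.2 : ℝ)
      - ((sb γ m).1.1 : ℝ) * ((sb γ m).2.2 : ℝ) = 1 := by exact_mod_cast det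
  push_cast
  rw [div_sub_div _ _ (by positivity) hb', div_eq_div_iff (by positivity) (by positivity)]
  linear_combination (((sb γ m).1.2 : ℝ) * (((sb γ m).1.2 : ℝ) + ((sb γ m).2.2 : ℝ))) * detR

lemma below_two {γ : ℝ} (hγ : Irrational γ) : (below γ 2).Infinite := by
  apply infinite_of_unbounded
  intro N
  obtain ⟨r, hrN, hr⟩ := exR hγ N
  obtain ⟨l, hlr, hl⟩ := exL hγ (r + 1)
  obtain ⟨n, hnr, hRn, hLn1⟩ := switch (P := fun m => Lcond γ (sb γ m)) hr l (by omega) hl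
  have e : sb γ (n+1)
      = ((sb γ n).1, ((sb γ n).1.1 + (sb γ n).2.1, (sb γ n).1.2 + (sb γ n).2.2)) := by
    rw [show sb γ (n+1) = sbStep γ (sb γ n) from rfl, sbStep_of_R hRn]
  have hdb : (sb γ (n+1)).1.2 < (sb γ (n+1)).2.2 := by
    rw [e]
    have hd := (inv_all hγ n).hd
    show (sb γ n).1.2 < (sb γ n).1.2 + (sb γ n).2.2
    omega
  obtain ⟨hb, hd, _, hrgt, det⟩ := inv_all hγ (n+1)
  refine ⟨((sb γ (n+1)).1.1 + (sb γ (n+1)).2.1, (sb γ (n+1)).1.2 + (sb γ (n+1)).2.2),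
    ⟨by omega, sub_pos.mpr hLn1, ?_⟩, ?_⟩
  · -- γ - mediant < 2 / q^2
    have hgap := mediant_left_gap hγ (n+1)
    have h1 : γ - (((sb γ (n+1)).1.1 + (sb γ (n+1)).2.1 : ℤ) : ℝ)
        / (((sb γ (n+1)).1.2 + (sb γ (n+1)).2.2 : ℕ) : ℝ)
        < 1 / (((sb γ (n+1)).2.2 : ℝ) * (((sb γ (n+1)).1.2 + (sb γ (n+1)).2.2 : ℕ) : ℝ)) := by
      rw [← hgap]
      have := hrgt
      linarith
    refine h1.trans_le ?_
    have hq : (0:ℝ) < (((sb γ (n+1)).1.2 + (sb γ (n+1)).2.2 : ℕ) : ℝ) := by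
      have h0 : 0 < (sb γ (n+1)).1.2 + (sb γ (n+1)).2.2 := by omega
      exact_mod_cast h0
    have hdR : (0:ℝ) < ((sb γ (n+1)).2.2 : ℝ) := by exact_mod_cast hd
    rw [div_le_div_iff₀ (by positivity) (by positivity)]
    have hq2d : (((sb γ (n+1)).1.2 + (sb γ (n+1)).2.2 : ℕ) : ℝ) ≤ 2 * ((sb γ (n+1)).2.2 : ℝ) := by
      have h0 : (sb γ (n+1)).1.2 + (sb γ (n+1)).2.2 ≤ 2 * (sb γ (n+1)).2.2 := by omega
      exact_mod_cast h0
    nlinarith [hq, hdR, hq2d]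
  · -- denominator large
    have := qsum_ge hγ (n+1)
    omega

lemma above_two {γ : ℝ} (hγ : Irrational γ) : (above γ 2).Infinite := by
  apply infinite_of_unbounded
  intro N
  obtain ⟨r, hrN, hr⟩ := exL hγ N
  obtain ⟨l, hlr, hl⟩ := exR hγ (r + 1)
  obtain ⟨n, hnr, hLn, hRn1⟩ := switch (P := fun m => ¬ Lcond γ (sb γ m))
    (not_not_intro hr) l (by omega) hl
  rw [not_not] at hLn
  have e : sb γ (n+1)
      = (((sb γ n).1.1 + (sb γ n).2.1, (sb γ n).1.2 + (sb γ n).2.2), (sb γ n).2) := by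
    rw [show sb γ (n+1) = sbStep γ (sb γ n) from rfl, sbStep_of_L hLn]
  have hdb : (sb γ (n+1)).2.2 < (sb γ (n+1)).1.2 := by
    rw [e]
    have hb := (inv_all hγ n).hb
    show (sb γ n).2.2 < (sb γ n).1.2 + (sb γ n).2.2
    omega
  obtain ⟨hb, hd, hlgt, _, det⟩ := inv_all hγ (n+1)
  have hmgt : γ < (((sb γ (n+1)).1.1 + (sb γ (n+1)).2.1 : ℤ) : ℝ)
      / (((sb γ (n+1)).1.2 + (sb γ (n+1)).2.2 : ℕ) : ℝ) := by
    rcases lt_or_eq_of_le (not_lt.mp hRn1) with h' | h'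
    · exact h'
    · exact absurd h' (irr_ne_div hγ _ _)
  refine ⟨((sb γ (n+1)).1.1 + (sb γ (n+1)).2.1, (sb γ (n+1)).1.2 + (sb γ (n+1)).2.2),
    ⟨by omega, sub_pos.mpr hmgt, ?_⟩, ?_⟩
  · have hgap := mediant_right_gap hγ (n+1)
    have h1 : (((sb γ (n+1)).1.1 + (sb γ (n+1)).2.1 : ℤ) : ℝ)
        / (((sb γ (n+1)).1.2 + (sb γ (n+1)).2.2 : ℕ) : ℝ) - γ
        < 1 / (((sb γ (n+1)).1.2 : ℝ) * (((sb γ (n+1)).1.2 + (sb γ (n+1)).2.2 : ℕ) : ℝ)) := by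
      rw [← hgap]
      linarith
    refine h1.trans_le ?_
    have hq : (0:ℝ) < (((sb γ (n+1)).1.2 + (sb γ (n+1)).2.2 : ℕ) : ℝ) := by
      have h0 : 0 < (sb γ (n+1)).1.2 + (sb γ (n+1)).2.2 := by omega
      exact_mod_cast h0
    have hbR : (0:ℝ) < ((sb γ (n+1)).1.2 : ℝ) := by exact_mod_cast hb
    rw [div_le_div_iff₀ (by positivity) (by positivity)]
    have hq2b : (((sb γ (n+1)).1.2 + (sb γ (n+1)).2.2 : ℕ) : ℝ) ≤ 2 * ((sb γ (n+1)).1.2 : ℝ) := by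
      have h0 : (sb γ (n+1)).1.2 + (sb γ (n+1)).2.2 ≤ 2 * (sb γ (n+1)).1.2 := by omega
      exact_mod_cast h0
    nlinarith [hq, hbR, hq2b]
  · have := qsum_ge hγ (n+1)
    omega
set_option maxHeartbeats 1000000 in
lemma transfer_B {γ c : ℝ} (hpos : 0 < γ) (hc : 0 < c) (h : (below γ c).Infinite) :
    (above γ⁻¹ c).Infinite := by
  apply infinite_of_unbounded
  intro N
  obtain ⟨⟨p, q⟩, hmem, hqN⟩ := unbounded_of_infinite h (fun pq hpq => below_abs hpq)
    (⌈c / γ⌉₊ + ⌈((N : ℝ) + c) / γ⌉₊ + 1)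
  obtain ⟨hq0, h1, h2⟩ := hmem
  have hQ1 : (1 : ℝ) ≤ (q : ℝ) := by
    have h0 : (1 : ℕ) ≤ q := hq0
    exact_mod_cast h0
  have hQ : (0 : ℝ) < (q : ℝ) := by linarith
  have hQa : c / γ < (q : ℝ) := by
    calc c / γ ≤ (⌈c / γ⌉₊ : ℝ) := Nat.le_ceil _
      _ < (q : ℝ) := by exact_mod_cast (by omega : ⌈c / γ⌉₊ < q)
  have hQb : ((N : ℝ) + c) / γ ≤ (q : ℝ) := by
    calc ((N : ℝ) + c) / γ ≤ (⌈((N : ℝ) + c) / γ⌉₊ : ℝ) := Nat.le_ceil _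
      _ ≤ (q : ℝ) := by exact_mod_cast (by omega : ⌈((N : ℝ) + c) / γ⌉₊ ≤ q)
  have hδ1 : 0 < γ - (p : ℝ) / q := h1
  have hδ2 : γ - (p : ℝ) / q < c / q ^ 2 := h2
  have hfrac : (γ - (p : ℝ) / q) * q = γ * q - p := by field_simp
  have h4 : (γ - (p : ℝ) / q) * q ^ 2 < c := by
    have := (lt_div_iff₀ (by positivity : (0:ℝ) < (q:ℝ) ^ 2)).mp hδ2
    linarith
  have h5 : (γ * q - (p : ℝ)) * q < c := by
    calc (γ * q - (p : ℝ)) * q = (γ - (p : ℝ) / q) * q ^ 2 := by rw [← hfrac]; ring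
      _ < c := h4
  have hnum : 0 < γ * q - (p : ℝ) := by rw [← hfrac]; exact mul_pos hδ1 hQ
  have hPq : (p : ℝ) / q < γ := by linarith
  have hPle : (p : ℝ) ≤ (q : ℝ) * γ := by
    have := (div_lt_iff₀ hQ).mp hPq
    linarith
  have hqγ : (N : ℝ) + c ≤ (q : ℝ) * γ := by
    have := (div_le_iff₀ hpos).mp hQb
    linarith
  have hPge : (N : ℝ) < (p : ℝ) := by nlinarith
  have hPpos : (0 : ℝ) < (p : ℝ) := by
    have hN0 : (0 : ℝ) ≤ (N : ℝ) := Nat.cast_nonneg N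
    linarith
  have hpz : 0 < p := by exact_mod_cast hPpos
  have hPcast : ((p.toNat : ℕ) : ℝ) = (p : ℝ) := by
    exact_mod_cast Int.toNat_of_nonneg hpz.le
  have hPne : (p : ℝ) ≠ 0 := hPpos.ne'
  have key : (((q : ℤ) : ℝ)) / ((p.toNat : ℕ) : ℝ) - γ⁻¹
      = (γ * q - (p : ℝ)) / ((p : ℝ) * γ) := by
    rw [hPcast, inv_eq_one_div, Int.cast_natCast, div_sub_div _ _ hPne hpos.ne']
    congr 1
    ring
  refine ⟨((q : ℤ), p.toNat), ⟨?_, ?_, ?_⟩, ?_⟩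
  · show 0 < p.toNat
    omega
  · show 0 < (((q : ℤ) : ℝ)) / ((p.toNat : ℕ) : ℝ) - γ⁻¹
    rw [key]
    exact div_pos hnum (mul_pos hPpos hpos)
  · show (((q : ℤ) : ℝ)) / ((p.toNat : ℕ) : ℝ) - γ⁻¹ < c / ((p.toNat : ℕ) : ℝ) ^ 2
    rw [key, hPcast, div_lt_div_iff₀ (mul_pos hPpos hpos) (by positivity)]
    -- (γq - p) * p^2 < c * (p * γ)
    have k1 : (γ * q - (p : ℝ)) * q * ((p:ℝ) * p) < c * ((p:ℝ) * p) :=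
      mul_lt_mul_of_pos_right h5 (mul_pos hPpos hPpos)
    have k2 : c * ((p : ℝ) * p) ≤ c * ((q : ℝ) * γ) * p := by
      have := mul_le_mul_of_nonneg_left hPle (mul_nonneg hc.le hPpos.le)
      nlinarith [this]
    nlinarith [k1, k2, mul_pos hnum (mul_pos hPpos hPpos)]
  · show N ≤ p.toNat
    have : (N : ℝ) < ((p.toNat : ℕ) : ℝ) := by rw [hPcast]; exact hPge
    exact_mod_cast this.le

set_option maxHeartbeats 1000000 in
lemma transfer_A {γ c ε : ℝ} (hpos : 0 < γ) (hc : 0 < c) (hε : 0 < ε)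
    (h : (above γ c).Infinite) : (below γ⁻¹ (c + ε)).Infinite := by
  apply infinite_of_unbounded
  intro N
  obtain ⟨⟨p, q⟩, hmem, hqN⟩ := unbounded_of_infinite h (fun pq hpq => above_abs hpq)
    (⌈(N : ℝ) / γ⌉₊ + ⌈c ^ 2 / (ε * γ)⌉₊ + 1)
  obtain ⟨hq0, h1, h2⟩ := hmem
  have hQ1 : (1 : ℝ) ≤ (q : ℝ) := by
    have h0 : (1 : ℕ) ≤ q := hq0
    exact_mod_cast h0
  have hQ : (0 : ℝ) < (q : ℝ) := by linarith
  have hQa : (N : ℝ) / γ ≤ (q : ℝ) := by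
    calc (N : ℝ) / γ ≤ (⌈(N : ℝ) / γ⌉₊ : ℝ) := Nat.le_ceil _
      _ ≤ (q : ℝ) := by exact_mod_cast (by omega : ⌈(N : ℝ) / γ⌉₊ ≤ q)
  have hQb : c ^ 2 / (ε * γ) < (q : ℝ) := by
    calc c ^ 2 / (ε * γ) ≤ (⌈c ^ 2 / (ε * γ)⌉₊ : ℝ) := Nat.le_ceil _
      _ < (q : ℝ) := by exact_mod_cast (by omega : ⌈c ^ 2 / (ε * γ)⌉₊ < q)
  have hδ1 : 0 < (p : ℝ) / q - γ := h1
  have hδ2 : (p : ℝ) / q - γ < c / q ^ 2 := h2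
  have hfrac : ((p : ℝ) / q - γ) * q = (p : ℝ) - γ * q := by field_simp
  have h4 : ((p : ℝ) / q - γ) * q ^ 2 < c := by
    have := (lt_div_iff₀ (by positivity : (0:ℝ) < (q:ℝ) ^ 2)).mp hδ2
    linarith
  have h5 : ((p : ℝ) - γ * q) * q < c := by
    calc ((p : ℝ) - γ * q) * q = ((p : ℝ) / q - γ) * q ^ 2 := by rw [← hfrac]; ring
      _ < c := h4
  have hnum : 0 < (p : ℝ) - γ * q := by rw [← hfrac]; exact mul_pos hδ1 hQ
  have hεq : c ^ 2 < ε * γ * (q : ℝ) ^ 2 := by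
    have h3 : c ^ 2 < ε * γ * q := by
      have := (div_lt_iff₀ (by positivity : (0:ℝ) < ε * γ)).mp hQb
      linarith
    nlinarith [mul_pos (mul_pos hε hpos) hQ]
  have hqγN : (N : ℝ) ≤ (q : ℝ) * γ := by
    have := (div_le_iff₀ hpos).mp hQa
    linarith
  have hPgt : (q : ℝ) * γ < (p : ℝ) := by nlinarith
  have hPpos : (0 : ℝ) < (p : ℝ) := lt_of_le_of_lt (by positivity) hPgt
  have hpz : 0 < p := by exact_mod_cast hPpos
  have hPcast : ((p.toNat : ℕ) : ℝ) = (p : ℝ) := by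
    exact_mod_cast Int.toNat_of_nonneg hpz.le
  have hPne : (p : ℝ) ≠ 0 := hPpos.ne'
  have key : γ⁻¹ - (((q : ℤ) : ℝ)) / ((p.toNat : ℕ) : ℝ)
      = ((p : ℝ) - γ * q) / ((p : ℝ) * γ) := by
    rw [hPcast, inv_eq_one_div, Int.cast_natCast, div_sub_div _ _ hpos.ne' hPne]
    rw [show γ * (p : ℝ) = (p : ℝ) * γ by ring]
    congr 1
    ring
  refine ⟨((q : ℤ), p.toNat), ⟨?_, ?_, ?_⟩, ?_⟩
  · show 0 < p.toNat
    omega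
  · show 0 < γ⁻¹ - (((q : ℤ) : ℝ)) / ((p.toNat : ℕ) : ℝ)
    rw [key]
    exact div_pos hnum (mul_pos hPpos hpos)
  · show γ⁻¹ - (((q : ℤ) : ℝ)) / ((p.toNat : ℕ) : ℝ) < (c + ε) / ((p.toNat : ℕ) : ℝ) ^ 2
    rw [key, hPcast, div_lt_div_iff₀ (mul_pos hPpos hpos) (by positivity)]
    -- (p - γq) * p^2 < (c+ε) * (p * γ)
    have hPlt : (p : ℝ) * q < γ * q ^ 2 + c := by nlinarith [h5]
    have k1 : ((p : ℝ) - γ * q) * q * ((p:ℝ) * p) < c * ((p:ℝ) * p) :=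
      mul_lt_mul_of_pos_right h5 (mul_pos hPpos hPpos)
    have k2 : c * ((p : ℝ) * q) < c * (γ * (q:ℝ) ^ 2) + c ^ 2 := by nlinarith
    have k3 : c * ((p : ℝ) * q) < c * (γ * (q:ℝ) ^ 2) + ε * γ * (q : ℝ) ^ 2 := by linarith
    -- hence c * p < (c + ε) * γ * q
    have k4 : c * (p : ℝ) < (c + ε) * γ * q := by
      apply (mul_lt_mul_iff_of_pos_right hQ).mp
      calc c * (p:ℝ) * q = c * ((p:ℝ) * q) := by ring
        _ < c * (γ * (q:ℝ)^2) + ε * γ * (q:ℝ)^2 := k3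
        _ = (c + ε) * γ * q * q := by ring
    nlinarith [k1, k4, mul_lt_mul_of_pos_right k4 hPpos, mul_pos hnum (mul_pos hPpos hPpos)]
  · show N ≤ p.toNat
    have : (N : ℝ) ≤ ((p.toNat : ℕ) : ℝ) := by rw [hPcast]; linarith
    exact_mod_cast this
lemma markov_eq {γ : ℝ} (hγ : Irrational γ) :
    markov γ = sInf ({c : ℝ | 0 < c ∧ (below γ c).Infinite}
      ∪ {c : ℝ | 0 < c ∧ (above γ c).Infinite}) := by
  unfold markov
  congr 1
  ext c
  simp only [Set.mem_setOf_eq, Set.mem_union]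
  rw [← and_or_left]
  apply and_congr_right
  intro _
  have hset : {pq : ℤ × ℕ | 0 < pq.2 ∧ |γ - (pq.1 : ℝ) / (pq.2 : ℝ)| < c / (pq.2 : ℝ) ^ 2}
      = below γ c ∪ above γ c := by
    ext ⟨p, q⟩
    simp only [below, above, Set.mem_setOf_eq, Set.mem_union]
    constructor
    · rintro ⟨hq, habs⟩
      have hne : γ - (p : ℝ) / q ≠ 0 := sub_ne_zero.mpr (irr_ne_div hγ p q)
      rcases hne.lt_or_gt with hlt | hlt
      · right
        refine ⟨hq, by linarith, ?_⟩
        rw [abs_sub_comm, abs_of_pos (by linarith)] at habs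
        linarith
      · left
        refine ⟨hq, hlt, ?_⟩
        rwa [abs_of_pos hlt] at habs
    · rintro (⟨hq, h1, h2⟩ | ⟨hq, h1, h2⟩)
      · exact ⟨hq, by rw [abs_of_pos h1]; exact h2⟩
      · exact ⟨hq, by rw [abs_sub_comm, abs_of_pos h1]; exact h2⟩
  rw [hset, Set.infinite_union]

end Stmt5

theorem stmt_5 (γ : ℝ) (hγ : Irrational γ) (hpos : 0 < γ) :
    markov γ = min (upsilon γ) (upsilon γ⁻¹) := by
  open Stmt5 in
  have hinv : Irrational γ⁻¹ := hγ.inv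
  have hinvpos : 0 < γ⁻¹ := inv_pos.mpr hpos
  have hAne : (2 : ℝ) ∈ {c : ℝ | 0 < c ∧ (below γ c).Infinite} := ⟨two_pos, below_two hγ⟩
  have hBne : (2 : ℝ) ∈ {c : ℝ | 0 < c ∧ (above γ c).Infinite} := ⟨two_pos, above_two hγ⟩
  have hA'ne : (2 : ℝ) ∈ {c : ℝ | 0 < c ∧ (below γ⁻¹ c).Infinite} := ⟨two_pos, below_two hinv⟩
  have hbA : BddBelow {c : ℝ | 0 < c ∧ (below γ c).Infinite} :=
    ⟨0, fun c hc => hc.1.le⟩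
  have hbB : BddBelow {c : ℝ | 0 < c ∧ (above γ c).Infinite} :=
    ⟨0, fun c hc => hc.1.le⟩
  have hbA' : BddBelow {c : ℝ | 0 < c ∧ (below γ⁻¹ c).Infinite} :=
    ⟨0, fun c hc => hc.1.le⟩
  rw [markov_eq hγ, csInf_union hbA ⟨2, hAne⟩ hbB ⟨2, hBne⟩,
    upsilon_eq γ, upsilon_eq γ⁻¹]
  congr 1
  -- sInf B = sInf A'
  apply le_antisymm
  · apply csInf_le_csInf hbB ⟨2, hA'ne⟩
    rintro c ⟨hc, hinf⟩
    refine ⟨hc, ?_⟩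
    have h := transfer_B hinvpos hc hinf
    rwa [inv_inv] at h
  · apply le_csInf ⟨2, hBne⟩
    rintro c ⟨hc, hinf⟩
    refine le_of_forall_pos_le_add fun ε hε => ?_
    exact csInf_le hbA' ⟨by positivity, transfer_A hpos hc hε hinf⟩
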